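/- Let X₂ = (2A−1)·2^{k} with A, k, B natural numbers, k ≥ 1. Then for every natural number r ≥ 2, T_{(2B−1)·2^r ± 1}(X₂) ≡ X₂ + 2^{k+r} (mod 2^{k+r+1}). -/

import Mathlib

open Polynomial Polynomial.Chebyshev

private lemma cheb_eval_mul (x m n : ℤ) :
    2 * (T ℤ m).eval x * (T ℤ n).eval x
      = (T ℤ (m + n)).eval x + (T ℤ (m - n)).eval x := by
  simpa using congr_arg (Polynomial.eval x) (T_mul_T ℤ m n)

/-- `T_{2^j}(x) ≡ 1 (mod 2^{2k+j+1})` for `j ≥ 2`, where `x = u·2^k`. -/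
private lemma cheb_pow2 (u : ℤ) (k : ℕ) (x : ℤ) (hx : x = u * 2 ^ k) :
    ∀ j : ℕ, 2 ≤ j → ∃ a : ℤ,
      (T ℤ ((2:ℤ) ^ j)).eval x = 1 + 2 ^ (2*k + j + 1) * a := by
  subst hx
  intro j hj
  induction j, hj using Nat.le_induction with
  | base =>
    have h := cheb_eval_mul (u * 2 ^ k) 2 2
    rw [show (2:ℤ) + 2 = (2:ℤ)^(2:ℕ) by norm_num, show (2:ℤ) - 2 = 0 by norm_num] at h
    have h2 : (T ℤ 2).eval (u * 2 ^ k) = 2 * (u * 2 ^ k) ^ 2 - 1 := by simp [T_two]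
    have h0 : (T ℤ 0).eval (u * 2 ^ k) = 1 := by simp [T_zero]
    rw [h2, h0] at h
    exact ⟨u^2 * (u^2 * 2^(2*k) - 1), by linear_combination -h⟩
  | succ j hj ih =>
    obtain ⟨a, ha⟩ := ih
    have h := cheb_eval_mul (u * 2 ^ k) ((2:ℤ)^j) ((2:ℤ)^j)
    rw [show (2:ℤ)^j + 2^j = 2^(j+1) by ring, show (2:ℤ)^j - 2^j = 0 by ring] at h
    have h0 : (T ℤ 0).eval (u * 2 ^ k) = 1 := by simp [T_zero]
    rw [h0, ha] at h
    exact ⟨2*a + 2^(2*k+j+1) * a^2, by linear_combination -h⟩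

/-- base computation: `T_{4±1}(x) - x = 2^{k+2}·(odd)`. -/
private lemma cheb_base (u : ℤ) (hu : Odd u) (k : ℕ) (hk : 1 ≤ k) (x : ℤ)
    (hx : x = u * 2 ^ k) (δ : ℤ) (hδ : δ = 1 ∨ δ = -1) :
    ∃ d : ℤ, Odd d ∧ (T ℤ (4 + δ)).eval x - x = 2 ^ (k + 2) * d := by
  subst hx
  obtain ⟨k', rfl⟩ : ∃ k', k = k' + 1 := ⟨k - 1, by omega⟩
  set y : ℤ := u * 2 ^ (k' + 1) with hy
  have h2 : (T ℤ 2).eval y = 2 * y ^ 2 - 1 := by simp [T_two]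
  have h1 : (T ℤ 1).eval y = y := by simp [T_one]
  have h3 : (T ℤ 3).eval y = 4 * y ^ 3 - 3 * y := by
    have h := cheb_eval_mul y 2 1
    rw [show (2:ℤ) + 1 = 3 by norm_num, show (2:ℤ) - 1 = 1 by norm_num, h2, h1] at h
    linear_combination -h
  have hodd : Odd (y ^ 2 - 1) := ⟨u ^ 2 * 2 ^ (2 * k' + 1) - 1, by rw [hy]; ring⟩
  rcases hδ with h | h <;> subst h
  · have h5 : (T ℤ 5).eval y = 16 * y ^ 5 - 20 * y ^ 3 + 5 * y := by
      have h := cheb_eval_mul y 3 2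
      rw [show (3:ℤ) + 2 = 5 by norm_num, show (3:ℤ) - 2 = 1 by norm_num, h2, h3, h1] at h
      linear_combination -h
    refine ⟨u * ((y ^ 2 - 1) * (4 * y ^ 2 - 1)), ?_, ?_⟩
    · exact hu.mul (hodd.mul ⟨2 * y ^ 2 - 1, by ring⟩)
    · rw [show (4:ℤ) + 1 = 5 by norm_num, h5, hy]; ring
  · refine ⟨u * (y ^ 2 - 1), hu.mul hodd, ?_⟩
    rw [show (4:ℤ) + -1 = 3 by norm_num, h3, hy]; ring

/-- induction up the powers: `T_{2^j+δ}(x) - x = 2^{j-2}·(T_{4+δ}(x)-x) + O(2^{3k+j+1})`. -/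
private lemma cheb_pow2_pm (u : ℤ) (k : ℕ) (x : ℤ) (hx : x = u * 2 ^ k)
    (δ : ℤ) (hδ : δ = 1 ∨ δ = -1) (d : ℤ)
    (hd : (T ℤ (4 + δ)).eval x - x = 2 ^ (k + 2) * d) :
    ∀ j : ℕ, 2 ≤ j → ∃ c : ℤ,
      (T ℤ ((2:ℤ) ^ j + δ)).eval x
        = x + 2 ^ (j - 2) * (2 ^ (k + 2) * d) + 2 ^ (3*k + j + 1) * c := by
  subst hx
  intro j hj
  induction j, hj using Nat.le_induction with
  | base =>
    refine ⟨0, ?_⟩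
    rw [show ((2:ℤ)^(2:ℕ) + δ) = 4 + δ by norm_num]
    linear_combination hd
  | succ j hj ih =>
    obtain ⟨c, hc⟩ := ih
    obtain ⟨a, ha⟩ := cheb_pow2 u k (u * 2 ^ k) rfl j (by omega)
    have h := cheb_eval_mul (u * 2 ^ k) ((2:ℤ)^j + δ) ((2:ℤ)^j)
    rw [show ((2:ℤ)^j + δ) + 2^j = 2^(j+1) + δ by ring,
        show ((2:ℤ)^j + δ) - 2^j = δ by ring] at h
    have hδx : (T ℤ δ).eval (u * 2 ^ k) = u * 2 ^ k := by
      rcases hδ with h1 | h1 <;> rw [h1] <;> simp [T_one, T_neg_one]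
    rw [hδx, ha, hc] at h
    obtain ⟨p, rfl⟩ : ∃ p, j = p + 2 := ⟨j - 2, by omega⟩
    simp only [Nat.add_sub_cancel] at hc h ⊢
    rw [show p + 2 + 1 - 2 = p + 1 by omega]
    refine ⟨c + a * (u + 2^p * (4*d) + 2^(2*k + (p+2) + 1) * c), ?_⟩
    linear_combination -h

/-- `T_{2^r+δ}(x) ≡ x + 2^{k+r} (mod 2^{k+r+1})`. -/
private lemma cheb_pow_pm (u : ℤ) (hu : Odd u) (k : ℕ) (hk : 1 ≤ k) (x : ℤ)
    (hx : x = u * 2 ^ k) (δ : ℤ) (hδ : δ = 1 ∨ δ = -1) (r : ℕ) (hr : 2 ≤ r) :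
    ∃ e : ℤ, (T ℤ ((2:ℤ) ^ r + δ)).eval x = x + 2 ^ (k + r) + 2 ^ (k + r + 1) * e := by
  obtain ⟨d, hdo, hd⟩ := cheb_base u hu k hk x hx δ hδ
  obtain ⟨c, hc⟩ := cheb_pow2_pm u k x hx δ hδ d hd r hr
  obtain ⟨m, hm⟩ := hdo
  obtain ⟨p, rfl⟩ : ∃ p, r = p + 2 := ⟨r - 2, by omega⟩
  simp only [Nat.add_sub_cancel] at hc
  exact ⟨m + 2 ^ (2*k) * c, by rw [hc, hm]; ring⟩

/-- Let `X₂ = (2A−1)·2^k` with `A, B ≥ 1`, `k ≥ 1`. Then for every `r ≥ 2`,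
`T_{(2B−1)·2^r ± 1}(X₂) ≡ X₂ + 2^{k+r} (mod 2^{k+r+1})`. -/
theorem chebyshev_odd_deg_at_X2 (A B k : ℕ) (hA : 1 ≤ A) (hB : 1 ≤ B) (hk : 1 ≤ k)
    (δ : ℤ) (hδ : δ = 1 ∨ δ = -1) (r : ℕ) (hr : 2 ≤ r) :
    (Polynomial.Chebyshev.T ℤ ((2 * (B : ℤ) - 1) * 2 ^ r + δ)).eval
        ((2 * (A : ℤ) - 1) * 2 ^ k) ≡
      (2 * (A : ℤ) - 1) * 2 ^ k + 2 ^ (k + r) [ZMOD 2 ^ (k + r + 1)] := by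
  set x : ℤ := (2 * (A : ℤ) - 1) * 2 ^ k with hx
  have hu : Odd (2 * (A:ℤ) - 1) := ⟨(A:ℤ) - 1, by ring⟩
  have hδ' : -δ = 1 ∨ -δ = -1 := by rcases hδ with h | h <;> simp [h]
  have key : ∀ B' : ℕ,
      ((2:ℤ) ^ (k+r+1) ∣ (T ℤ ((2 * (B':ℤ) - 1) * 2 ^ r + δ)).eval x - (x + 2 ^ (k+r)))
      ∧ ((2:ℤ) ^ (k+r+1) ∣ (T ℤ ((2 * (B':ℤ) + 1) * 2 ^ r + δ)).eval x - (x + 2 ^ (k+r))) := by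
    intro B'
    induction B' with
    | zero =>
      constructor
      · obtain ⟨e, he⟩ := cheb_pow_pm (2 * (A:ℤ) - 1) hu k hk x hx (-δ) hδ' r hr
        rw [show (2 * ((0:ℕ):ℤ) - 1) * 2 ^ r + δ = -((2:ℤ)^r + -δ) by push_cast; ring, T_neg]
        exact ⟨e, by rw [he]; ring⟩
      · obtain ⟨e, he⟩ := cheb_pow_pm (2 * (A:ℤ) - 1) hu k hk x hx δ hδ r hr
        rw [show (2 * ((0:ℕ):ℤ) + 1) * 2 ^ r + δ = (2:ℤ)^r + δ by push_cast; ring]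
        exact ⟨e, by rw [he]; ring⟩
    | succ B' ih =>
      obtain ⟨ih0, ih1⟩ := ih
      constructor
      · rw [show (2 * ((B'+1:ℕ):ℤ) - 1) * 2 ^ r + δ = (2 * (B':ℤ) + 1) * 2 ^ r + δ by
          push_cast; ring]
        exact ih1
      · rw [show (2 * ((B'+1:ℕ):ℤ) + 1) * 2 ^ r + δ = (2 * (B':ℤ) + 3) * 2 ^ r + δ by
          push_cast; ring]
        obtain ⟨a, ha⟩ := cheb_pow2 (2 * (A:ℤ) - 1) k x hx (r+1) (by omega)
        obtain ⟨e₀, he₀⟩ := ih0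
        obtain ⟨e₁, he₁⟩ := ih1
        have h := cheb_eval_mul x ((2 * (B':ℤ) + 1) * 2 ^ r + δ) ((2:ℤ)^(r+1))
        rw [show ((2 * (B':ℤ) + 1) * 2 ^ r + δ) + 2^(r+1) = (2 * (B':ℤ) + 3) * 2 ^ r + δ by
              ring,
            show ((2 * (B':ℤ) + 1) * 2 ^ r + δ) - 2^(r+1) = (2 * (B':ℤ) - 1) * 2 ^ r + δ by
              ring, ha] at h
        refine ⟨2*e₁ - e₀ + 2^(k+2) * a * ((x + 2^(k+r)) + 2^(k+r+1) * e₁), ?_⟩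
        linear_combination -h + (2*(1 + 2^(2*k+(r+1)+1)*a)) * he₁ - he₀
  exact ((Int.modEq_iff_dvd).mpr (key B).1).symm
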